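/- Consider the two-player ISG with player 1's services s_1, s_2, s_3 having rewards 1, 1, 1 and edges (s_1, s_2), (s_2, s_3), and player 2's services w_1 (reward 1), w_2 (reward 100), w_3 (reward 100), with cross edges (s_1, w_1), (s_2, w_2), (s_2, w_3) (transitively closed). Then the conflict-free schedule π^A = (π_1 = (s_1, s_2, s_3), π_2 = (w_1, w_2, w_3)) has welfare 309, while the schedule π^B = (π_1 = (s_1, s_2, s_3), π_2 = (w_2, w_3, w_1)) has welfare 407 and is not conflict-free (service w_2 is deployed at time 1 but activates at time 2). Hence a conflict-free schedule exists but no welfare-maximizing schedule is conflict-free is witnessed: the best conflict-free welfare is strictly less than the maximum welfare. -/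

import Mathlib

open scoped Classical
noncomputable section

/-- The (1-based) time slot at which service `v` is deployed. -/
def slot {k q : ℕ} (σ : Fin k → Equiv.Perm (Fin q)) (v : Fin k × Fin q) : ℕ :=
  (σ v.1 v.2 : ℕ) + 1

/-- Activation time of `v`: latest deployment among `v` and its in-neighbors. -/
def act {k q : ℕ} (E : Fin k × Fin q → Fin k × Fin q → Prop)
    (σ : Fin k → Equiv.Perm (Fin q)) (v : Fin k × Fin q) : ℕ :=
  (insert v (Finset.univ.filter fun w => E w v)).sup (slot σ)

/-- Player `i`'s utility under rewards `r`. -/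
def utilR {k q : ℕ} (E : Fin k × Fin q → Fin k × Fin q → Prop)
    (r : Fin k × Fin q → ℝ) (σ : Fin k → Equiv.Perm (Fin q)) (i : Fin k) : ℝ :=
  ∑ j : Fin q, r (i, j) * ((q + 1 - act E σ (i, j) : ℕ) : ℝ)

/-- Utilitarian social welfare. -/
def welfareR {k q : ℕ} (E : Fin k × Fin q → Fin k × Fin q → Prop)
    (r : Fin k × Fin q → ℝ) (σ : Fin k → Equiv.Perm (Fin q)) : ℝ :=
  ∑ i : Fin k, utilR E r σ i

/-- Pure Nash equilibrium: no unilateral deviation improves a player's utility. -/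
def PNER {k q : ℕ} (E : Fin k × Fin q → Fin k × Fin q → Prop)
    (r : Fin k × Fin q → ℝ) (σ : Fin k → Equiv.Perm (Fin q)) : Prop :=
  ∀ (i : Fin k) (τ : Equiv.Perm (Fin q)),
    utilR E r (Function.update σ i τ) i ≤ utilR E r σ i

/-- A schedule is conflict-free if every service activates upon deployment. -/
def conflictFree {k q : ℕ} (E : Fin k × Fin q → Fin k × Fin q → Prop)
    (σ : Fin k → Equiv.Perm (Fin q)) : Prop :=
  ∀ v : Fin k × Fin q, act E σ v = slot σ v

/-- Base edges: (s₁,s₂), (s₂,s₃), (s₁,w₁), (s₂,w₂), (s₂,w₃). -/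
def base18 : Fin 2 × Fin 3 → Fin 2 × Fin 3 → Prop := fun v w =>
  (v, w) ∈ ([((0, 0), (0, 1)), ((0, 1), (0, 2)), ((0, 0), (1, 0)),
             ((0, 1), (1, 1)), ((0, 1), (1, 2))] :
      List ((Fin 2 × Fin 3) × (Fin 2 × Fin 3)))

/-- The dependency relation: transitive closure of the base edges. -/
def E18 : Fin 2 × Fin 3 → Fin 2 × Fin 3 → Prop := Relation.TransGen base18

/-- Rewards: player 1: 1, 1, 1; player 2: 1, 100, 100. -/
def r18 : Fin 2 × Fin 3 → ℝ := fun v => ![![1, 1, 1], ![1, 100, 100]] v.1 v.2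

/-- Schedule π^A: player 1 plays (s₁,s₂,s₃), player 2 plays (w₁,w₂,w₃). -/
def σ18A : Fin 2 → Equiv.Perm (Fin 3) := fun _ => 1

/-- Schedule π^B: player 1 plays (s₁,s₂,s₃), player 2 plays (w₂,w₃,w₁). -/
def σ18B : Fin 2 → Equiv.Perm (Fin 3) := ![1, (finRotate 3)⁻¹]

def EL : List ((Fin 2 × Fin 3) × (Fin 2 × Fin 3)) :=
  [((0, 0), (0, 1)), ((0, 1), (0, 2)), ((0, 0), (1, 0)),
   ((0, 1), (1, 1)), ((0, 1), (1, 2)),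
   ((0, 0), (0, 2)), ((0, 0), (1, 1)), ((0, 0), (1, 2))]

lemma base_sub : ∀ a b, base18 a b → (a, b) ∈ EL := by
  unfold base18 EL; decide

lemma EL_step : ∀ a b c, (a, b) ∈ EL → base18 b c → (a, c) ∈ EL := by
  unfold base18 EL
  intro a b c hab hbc
  simp only [List.mem_cons, List.not_mem_nil, or_false, Prod.mk.injEq] at hab hbc
  rcases hab with ⟨rfl,rfl⟩|⟨rfl,rfl⟩|⟨rfl,rfl⟩|⟨rfl,rfl⟩|⟨rfl,rfl⟩|⟨rfl,rfl⟩|⟨rfl,rfl⟩|⟨rfl,rfl⟩ <;>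
    rcases hbc with ⟨h,rfl⟩|⟨h,rfl⟩|⟨h,rfl⟩|⟨h,rfl⟩|⟨h,rfl⟩ <;>
    first
      | decide
      | exact absurd h (by decide)

lemma base01 : base18 (0, 0) (0, 1) := by unfold base18; decide

lemma E18_iff (a b : Fin 2 × Fin 3) : E18 a b ↔ (a, b) ∈ EL := by
  constructor
  · intro h
    induction h with
    | single h => exact base_sub _ _ h
    | tail _ hb ih => exact EL_step _ _ _ ih hb
  · intro h
    simp only [EL, List.mem_cons, List.not_mem_nil, or_false] at h
    rcases h with h | h | h | h | h | h | h | h <;>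
      rw [Prod.ext_iff] at h <;> obtain ⟨rfl, rfl⟩ := h
    · exact .single (by unfold base18; decide)
    · exact .single (by unfold base18; decide)
    · exact .single (by unfold base18; decide)
    · exact .single (by unfold base18; decide)
    · exact .single (by unfold base18; decide)
    · exact .tail (.single base01) (by unfold base18; decide)
    · exact .tail (.single base01) (by unfold base18; decide)
    · exact .tail (.single base01) (by unfold base18; decide)
lemma act_eq (σ : Fin 2 → Equiv.Perm (Fin 3)) (v : Fin 2 × Fin 3)
    (S : Finset (Fin 2 × Fin 3)) (hS : ∀ w, (w, v) ∈ EL ↔ w ∈ S) :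
    act E18 σ v = (insert v S).sup (slot σ) := by
  unfold act
  congr 2
  ext w
  simp only [Finset.mem_filter, Finset.mem_univ, true_and, E18_iff]
  exact hS w

lemma act00 (σ : Fin 2 → Equiv.Perm (Fin 3)) :
    act E18 σ (0, 0) = slot σ (0, 0) := by
  rw [act_eq σ _ (∅ : Finset (Fin 2 × Fin 3))
    (fun w => by rcases w with ⟨i, j⟩; fin_cases i <;> fin_cases j <;> decide)]
  simp

lemma act01 (σ : Fin 2 → Equiv.Perm (Fin 3)) :
    act E18 σ (0, 1) = max (slot σ (0, 1)) (slot σ (0, 0)) := by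
  rw [act_eq σ _ ({(0, 0)} : Finset (Fin 2 × Fin 3))
    (fun w => by rcases w with ⟨i, j⟩; fin_cases i <;> fin_cases j <;> decide)]
  simp

lemma act02 (σ : Fin 2 → Equiv.Perm (Fin 3)) :
    act E18 σ (0, 2) = max (slot σ (0, 2)) (max (slot σ (0, 0)) (slot σ (0, 1))) := by
  rw [act_eq σ _ ({(0, 0), (0, 1)} : Finset (Fin 2 × Fin 3))
    (fun w => by rcases w with ⟨i, j⟩; fin_cases i <;> fin_cases j <;> decide)]
  simp

lemma act10 (σ : Fin 2 → Equiv.Perm (Fin 3)) :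
    act E18 σ (1, 0) = max (slot σ (1, 0)) (slot σ (0, 0)) := by
  rw [act_eq σ _ ({(0, 0)} : Finset (Fin 2 × Fin 3))
    (fun w => by rcases w with ⟨i, j⟩; fin_cases i <;> fin_cases j <;> decide)]
  simp

lemma act11 (σ : Fin 2 → Equiv.Perm (Fin 3)) :
    act E18 σ (1, 1) = max (slot σ (1, 1)) (max (slot σ (0, 0)) (slot σ (0, 1))) := by
  rw [act_eq σ _ ({(0, 0), (0, 1)} : Finset (Fin 2 × Fin 3))
    (fun w => by rcases w with ⟨i, j⟩; fin_cases i <;> fin_cases j <;> decide)]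
  simp

lemma act12 (σ : Fin 2 → Equiv.Perm (Fin 3)) :
    act E18 σ (1, 2) = max (slot σ (1, 2)) (max (slot σ (0, 0)) (slot σ (0, 1))) := by
  rw [act_eq σ _ ({(0, 0), (0, 1)} : Finset (Fin 2 × Fin 3))
    (fun w => by rcases w with ⟨i, j⟩; fin_cases i <;> fin_cases j <;> decide)]
  simp

-- slot values for the concrete schedules
example : slot σ18A (0,0) = 1 ∧ slot σ18A (0,1) = 2 ∧ slot σ18A (0,2) = 3 := by
  refine ⟨?_, ?_, ?_⟩ <;> simp [slot, σ18A]
example : slot σ18A (1,0) = 1 ∧ slot σ18A (1,1) = 2 ∧ slot σ18A (1,2) = 3 := by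
  refine ⟨?_, ?_, ?_⟩ <;> simp [slot, σ18A]
example : slot σ18B (1,0) = 3 ∧ slot σ18B (1,1) = 1 ∧ slot σ18B (1,2) = 2 := by
  refine ⟨?_, ?_, ?_⟩ <;> simp [slot, σ18B] <;> decide
example : slot σ18B (0,0) = 1 := by simp [slot, σ18B]
lemma slotA : ∀ i j, slot σ18A (i, j) = (j : ℕ) + 1 := by
  intro i j; simp [slot, σ18A]

lemma slotB0 : ∀ j, slot σ18B (0, j) = (j : ℕ) + 1 := by
  intro j; simp [slot, σ18B]

lemma slotB10 : slot σ18B (1, 0) = 3 := by simp [slot, σ18B]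
lemma slotB11 : slot σ18B (1, 1) = 1 := by simp [slot, σ18B]
lemma slotB12 : slot σ18B (1, 2) = 2 := by simp [slot, σ18B]

theorem stmt_18 :
    welfareR E18 r18 σ18A = 309 ∧ conflictFree E18 σ18A ∧
    welfareR E18 r18 σ18B = 407 ∧
    -- w₂ is deployed at time 1 but activates at time 2, so π^B is not conflict-free
    slot σ18B (1, 1) = 1 ∧ act E18 σ18B (1, 1) = 2 ∧ ¬ conflictFree E18 σ18B ∧
    -- every conflict-free schedule has welfare strictly below the maximum
    (∀ σ : Fin 2 → Equiv.Perm (Fin 3), conflictFree E18 σ →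
      welfareR E18 r18 σ < welfareR E18 r18 σ18B) := by
  have hA : welfareR E18 r18 σ18A = 309 := by
    simp only [welfareR, utilR, Fin.sum_univ_two, Fin.sum_univ_three,
      act00, act01, act02, act10, act11, act12, slotA]
    norm_num [r18, Matrix.cons_val, Matrix.cons_val_two, Matrix.tail_cons, Matrix.head_cons]
  have hcfA : conflictFree E18 σ18A := by
    intro v
    fin_cases v
    · show act E18 σ18A (0, 0) = slot σ18A (0, 0); rw [act00]
    · show act E18 σ18A (0, 1) = slot σ18A (0, 1); rw [act01, slotA 0 1, slotA 0 0]; decide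
    · show act E18 σ18A (0, 2) = slot σ18A (0, 2); rw [act02, slotA 0 2, slotA 0 0, slotA 0 1]; decide
    · show act E18 σ18A (1, 0) = slot σ18A (1, 0); rw [act10, slotA 1 0, slotA 0 0]; decide
    · show act E18 σ18A (1, 1) = slot σ18A (1, 1); rw [act11, slotA 1 1, slotA 0 0, slotA 0 1]; decide
    · show act E18 σ18A (1, 2) = slot σ18A (1, 2); rw [act12, slotA 1 2, slotA 0 0, slotA 0 1]; decide
  have hB : welfareR E18 r18 σ18B = 407 := by
    simp only [welfareR, utilR, Fin.sum_univ_two, Fin.sum_univ_three,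
      act00, act01, act02, act10, act11, act12, slotB0, slotB10, slotB11, slotB12]
    norm_num [r18, Matrix.cons_val, Matrix.cons_val_two, Matrix.tail_cons, Matrix.head_cons]
  have hactB11 : act E18 σ18B (1, 1) = 2 := by
    rw [act11, slotB11, slotB0, slotB0]; norm_num
  refine ⟨hA, hcfA, hB, slotB11, hactB11, ?_, ?_⟩
  · intro h
    have := h (1, 1)
    rw [hactB11, slotB11] at this
    omega
  · intro σ hcf
    have e : ∀ i j, slot σ (i, j) = (σ i j : ℕ) + 1 := fun _ _ => rfl
    -- constraints from conflict-freeness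
    have l01 : slot σ (0, 0) ≤ slot σ (0, 1) := by
      have h := hcf (0, 1); rw [act01] at h; exact max_eq_left_iff.mp h
    have l02 : max (slot σ (0, 0)) (slot σ (0, 1)) ≤ slot σ (0, 2) := by
      have h := hcf (0, 2); rw [act02] at h; exact max_eq_left_iff.mp h
    have l11 : max (slot σ (0, 0)) (slot σ (0, 1)) ≤ slot σ (1, 1) := by
      have h := hcf (1, 1); rw [act11] at h; exact max_eq_left_iff.mp h
    have l12 : max (slot σ (0, 0)) (slot σ (0, 1)) ≤ slot σ (1, 2) := by
      have h := hcf (1, 2); rw [act12] at h; exact max_eq_left_iff.mp h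
    rw [max_le_iff] at l02 l11 l12
    simp only [e] at l01 l02 l11 l12
    -- injectivity and bounds
    have d0a : (σ 0 0 : ℕ) ≠ (σ 0 1 : ℕ) :=
      Fin.val_ne_of_ne ((Equiv.injective (σ 0)).ne (by decide))
    have d0b : (σ 0 0 : ℕ) ≠ (σ 0 2 : ℕ) :=
      Fin.val_ne_of_ne ((Equiv.injective (σ 0)).ne (by decide))
    have d0c : (σ 0 1 : ℕ) ≠ (σ 0 2 : ℕ) :=
      Fin.val_ne_of_ne ((Equiv.injective (σ 0)).ne (by decide))
    have d1a : (σ 1 0 : ℕ) ≠ (σ 1 1 : ℕ) :=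
      Fin.val_ne_of_ne ((Equiv.injective (σ 1)).ne (by decide))
    have d1b : (σ 1 0 : ℕ) ≠ (σ 1 2 : ℕ) :=
      Fin.val_ne_of_ne ((Equiv.injective (σ 1)).ne (by decide))
    have d1c : (σ 1 1 : ℕ) ≠ (σ 1 2 : ℕ) :=
      Fin.val_ne_of_ne ((Equiv.injective (σ 1)).ne (by decide))
    have b00 := (σ 0 0).isLt
    have b01 := (σ 0 1).isLt
    have b02 := (σ 0 2).isLt
    have b10 := (σ 1 0).isLt
    have b11 := (σ 1 1).isLt
    have b12 := (σ 1 2).isLt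
    have hvals : (σ 0 0 : ℕ) = 0 ∧ (σ 0 1 : ℕ) = 1 ∧ (σ 0 2 : ℕ) = 2 ∧
        (σ 1 0 : ℕ) = 0 ∧
        (((σ 1 1 : ℕ) = 1 ∧ (σ 1 2 : ℕ) = 2) ∨ ((σ 1 1 : ℕ) = 2 ∧ (σ 1 2 : ℕ) = 1)) := by
      omega
    obtain ⟨h00, h01, h02, h10, hcase⟩ := hvals
    have hwσ : welfareR E18 r18 σ = 309 := by
      simp only [welfareR, utilR, Fin.sum_univ_two, Fin.sum_univ_three,
        hcf (0, 0), hcf (0, 1), hcf (0, 2), hcf (1, 0), hcf (1, 1), hcf (1, 2),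
        e, h00, h01, h02, h10]
      rcases hcase with ⟨ha, hb⟩ | ⟨ha, hb⟩ <;> rw [ha, hb] <;> norm_num [r18, Matrix.cons_val, Matrix.cons_val_two, Matrix.tail_cons, Matrix.head_cons]
    rw [hwσ, hB]; norm_num
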